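/- Relative perturbation bound for the Drazin inverse: let A, E, B, X, Y be n×n quaternion matrices with B = A + E. Assume X is a k-Drazin inverse of A, Y is an m-Drazin inverse of B, E = (A * X) * E * (A * X), ‖X * E‖₂ < 1, 1 + X * E is a unit of the matrix ring, and ‖(1 + X * E)⁻¹‖₂ ≤ 1 / (1 - ‖X * E‖₂). Then ‖Y - X‖₂ ≤ ‖X‖₂ * ‖X * E‖₂ / (1 - ‖X * E‖₂). -/

import Mathlib

noncomputable section

notation "ℍ" => Quaternion ℝ

/-- The bounded ℝ-linear map `x ↦ M.mulVec x` between `PiLp 2` spaces of quaternion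
vectors. -/
def mulVecCLM {m n : ℕ} (M : Matrix (Fin m) (Fin n) ℍ) :
    PiLp 2 (fun _ : Fin n => ℍ) →L[ℝ] PiLp 2 (fun _ : Fin m => ℍ) :=
  LinearMap.toContinuousLinearMap
    { toFun := fun x => WithLp.toLp 2 (M.mulVec x)
      map_add' := fun x y => by
        first
        | simp only [WithLp.ofLp_add, Matrix.mulVec_add, WithLp.toLp_add]
        | simp [Matrix.mulVec_add]
      map_smul' := fun r x => by
        first
        | simp only [WithLp.ofLp_smul, Matrix.mulVec_smul, WithLp.toLp_smul, RingHom.id_apply]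
        | simp [Matrix.mulVec_smul] }

/-- The spectral norm of a quaternion matrix: the operator norm of `x ↦ M.mulVec x`. -/
def specNorm {m n : ℕ} (M : Matrix (Fin m) (Fin n) ℍ) : ℝ := ‖mulVecCLM M‖

/-- `X` is a `k`-Drazin inverse of the square quaternion matrix `A`. -/
def IsDrazinInverse {n : ℕ} (A X : Matrix (Fin n) (Fin n) ℍ) (k : ℕ) : Prop :=
  A ^ k * X * A = A ^ k ∧ X * A * X = X ∧ A * X = X * A

lemma specNorm_nonneg {m n : ℕ} (M : Matrix (Fin m) (Fin n) ℍ) : 0 ≤ specNorm M :=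
  norm_nonneg (mulVecCLM M)

lemma mulVecCLM_mul {n : ℕ} (M N : Matrix (Fin n) (Fin n) ℍ) :
    mulVecCLM (M * N) = (mulVecCLM M).comp (mulVecCLM N) := by
  refine ContinuousLinearMap.ext fun x => ?_
  exact congrArg (WithLp.toLp 2) (Matrix.mulVec_mulVec x.ofLp M N).symm

lemma specNorm_mul_le {n : ℕ} (M N : Matrix (Fin n) (Fin n) ℍ) :
    specNorm (M * N) ≤ specNorm M * specNorm N := by
  rw [specNorm, mulVecCLM_mul]
  exact ContinuousLinearMap.opNorm_comp_le _ _

lemma specNorm_neg {n : ℕ} (M : Matrix (Fin n) (Fin n) ℍ) :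
    specNorm (-M) = specNorm M := by
  have h : mulVecCLM (-M) = -(mulVecCLM M) := by
    refine ContinuousLinearMap.ext fun x => ?_
    exact congrArg (WithLp.toLp 2) (Matrix.neg_mulVec x.ofLp M)
  rw [specNorm, h]
  exact norm_neg (mulVecCLM M)

lemma pow_absorb {R : Type*} [Ring R] (A X : R) (hc : A * X = X * A) (h2 : X * A * X = X) :
    ∀ j : ℕ, X ^ (j + 1) * A ^ j = X := by
  intro j
  induction j with
  | zero => simp
  | succ j ih =>
    calc X ^ (j + 1 + 1) * A ^ (j + 1) = X * (X ^ (j + 1) * A ^ j) * A := by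
          rw [pow_succ A, pow_succ' X]
          noncomm_ring
    _ = X * X * A := by rw [ih]
    _ = X := by rw [mul_assoc, ← hc, ← mul_assoc, h2]

lemma drazin_unique {R : Type*} [Ring R] (A X Y : R) (k m : ℕ)
    (hX1 : A ^ k * X * A = A ^ k) (hX2 : X * A * X = X) (hX3 : A * X = X * A)
    (hY1 : A ^ m * Y * A = A ^ m) (hY2 : Y * A * Y = Y) (hY3 : A * Y = Y * A) :
    X = Y := by
  have hXm : X ^ (m + 1) * A ^ m = X := pow_absorb A X hX3 hX2 m
  have hYk : Y ^ (k + 1) * A ^ k = Y := pow_absorb A Y hY3 hY2 k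
  have cAY : Commute A Y := hY3
  have cAX : Commute A X := hX3
  have hYk' : A ^ k * Y ^ (k + 1) = Y := by
    rw [(cAY.pow_pow k (k + 1)).eq, hYk]
  have step1 : X = X * Y * A := by
    calc X = X ^ (m + 1) * A ^ m := hXm.symm
    _ = X ^ (m + 1) * (A ^ m * Y * A) := by rw [hY1]
    _ = (X ^ (m + 1) * A ^ m) * Y * A := by noncomm_ring
    _ = X * Y * A := by rw [hXm]
  have hAk : A ^ k = A * X * A ^ k := by
    calc A ^ k = A ^ k * X * A := hX1.symm
    _ = X * A ^ k * A := by rw [(cAX.pow_left k).eq]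
    _ = X * A ^ (k + 1) := by rw [mul_assoc, ← pow_succ]
    _ = X * (A * A ^ k) := by rw [pow_succ']
    _ = A * X * A ^ k := by rw [← mul_assoc, ← hX3]
  have step2 : Y = A * X * Y := by
    calc Y = A ^ k * Y ^ (k + 1) := hYk'.symm
    _ = (A * X * A ^ k) * Y ^ (k + 1) := by rw [← hAk]
    _ = A * X * (A ^ k * Y ^ (k + 1)) := by noncomm_ring
    _ = A * X * Y := by rw [hYk']
  calc X = X * Y * A := step1
  _ = X * (A * Y) := by rw [mul_assoc, ← hY3]
  _ = X * A * Y := by rw [← mul_assoc]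
  _ = A * X * Y := by rw [← hX3]
  _ = Y := step2.symm

set_option maxHeartbeats 2000000 in
/-- Relative perturbation bound for the Drazin inverse. -/
theorem drazin_perturbation_relative_bound {n : ℕ}
    (A E B X Y : Matrix (Fin n) (Fin n) ℍ) (k m : ℕ)
    (hB : B = A + E)
    (hX : IsDrazinInverse A X k) (hY : IsDrazinInverse B Y m)
    (hE : E = (A * X) * E * (A * X))
    (hnorm : specNorm (X * E) < 1)
    (hU : IsUnit (1 + X * E))
    (hinv : specNorm (Ring.inverse (1 + X * E)) ≤ 1 / (1 - specNorm (X * E))) :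
    specNorm (Y - X) ≤ specNorm X * specNorm (X * E) / (1 - specNorm (X * E)) := by
  obtain ⟨hX1, hX2, hX3⟩ := hX
  obtain ⟨hY1, hY2, hY3⟩ := hY
  set Ui : Matrix (Fin n) (Fin n) ℍ := Ring.inverse (1 + X * E) with hUidef
  have hUUi : (1 + X * E) * Ui = 1 := Ring.mul_inverse_cancel _ hU
  have hUiU : Ui * (1 + X * E) = 1 := Ring.inverse_mul_cancel _ hU
  -- basic facts about the idempotent P = A * X
  have hPP : (A * X) * (A * X) = A * X := by
    calc (A * X) * (A * X) = A * (X * A * X) := by noncomm_ring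
    _ = A * X := by rw [hX2]
  have hPE : (A * X) * E = E := by
    calc (A * X) * E = (A * X) * ((A * X) * E * (A * X)) := by rw [← hE]
    _ = ((A * X) * (A * X)) * E * (A * X) := by noncomm_ring
    _ = (A * X) * E * (A * X) := by rw [hPP]
    _ = E := hE.symm
  have hEP : E * (A * X) = E := by
    calc E * (A * X) = ((A * X) * E * (A * X)) * (A * X) := by rw [← hE]
    _ = (A * X) * E * ((A * X) * (A * X)) := by noncomm_ring
    _ = (A * X) * E * (A * X) := by rw [hPP]
    _ = E := hE.symm
  have hPX : (A * X) * X = X := by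
    rw [hX3]; exact hX2
  have hXP : X * (A * X) = X := by
    rw [← mul_assoc]; exact hX2
  -- (1 - A*X) is annihilated appropriately
  have hXE1P : (X * E) * (1 - A * X) = 0 := by
    rw [mul_sub, mul_one, mul_assoc, hEP, sub_self]
  have h1PXE : (1 - A * X) * (X * E) = 0 := by
    rw [sub_mul, one_mul, ← mul_assoc, hPX, sub_self]
  have hE1P : E * (1 - A * X) = 0 := by
    rw [mul_sub, mul_one, hEP, sub_self]
  have h1PE : (1 - A * X) * E = 0 := by
    rw [sub_mul, one_mul, hPE, sub_self]
  have hU1P : (1 + X * E) * (1 - A * X) = 1 - A * X := by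
    rw [add_mul, one_mul, hXE1P, add_zero]
  have h1PU : (1 - A * X) * (1 + X * E) = 1 - A * X := by
    rw [mul_add, mul_one, h1PXE, add_zero]
  have hUi1P : Ui * (1 - A * X) = 1 - A * X := by
    conv_lhs => rw [← hU1P]
    rw [← mul_assoc, hUiU, one_mul]
  have h1PUi : (1 - A * X) * Ui = 1 - A * X := by
    conv_lhs => rw [← h1PU]
    rw [mul_assoc, hUUi, mul_one]
  -- V = 1 + E * X is a unit
  have hVunit : IsUnit (1 + E * X) := by
    refine ⟨⟨1 + E * X, 1 - E * Ui * X, ?_, ?_⟩, rfl⟩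
    · calc (1 + E * X) * (1 - E * Ui * X)
          = 1 + E * X - E * ((1 + X * E) * Ui) * X := by noncomm_ring
      _ = 1 := by rw [hUUi]; noncomm_ring
    · calc (1 - E * Ui * X) * (1 + E * X)
          = 1 + E * X - E * (Ui * (1 + X * E)) * X := by noncomm_ring
      _ = 1 := by rw [hUiU]; noncomm_ring
  set Vi : Matrix (Fin n) (Fin n) ℍ := Ring.inverse (1 + E * X) with hVidef
  have hVVi : (1 + E * X) * Vi = 1 := Ring.mul_inverse_cancel _ hVunit
  have hViV : Vi * (1 + E * X) = 1 := Ring.inverse_mul_cancel _ hVunit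
  have hUXXV : (1 + X * E) * X = X * (1 + E * X) := by noncomm_ring
  have hZ : Ui * X = X * Vi := by
    calc Ui * X = Ui * X * ((1 + E * X) * Vi) := by rw [hVVi, mul_one]
    _ = Ui * (X * (1 + E * X)) * Vi := by noncomm_ring
    _ = Ui * ((1 + X * E) * X) * Vi := by rw [hUXXV]
    _ = (Ui * (1 + X * E)) * (X * Vi) := by noncomm_ring
    _ = X * Vi := by rw [hUiU, one_mul]
  have hV1P : (1 - A * X) * (1 + E * X) = 1 - A * X := by
    have h0 : (1 - A * X) * E = 0 := h1PE
    calc (1 - A * X) * (1 + E * X) = (1 - A * X) + ((1 - A * X) * E) * X := by noncomm_ring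
    _ = 1 - A * X := by rw [h0, zero_mul, add_zero]
  have h1PVi : (1 - A * X) * Vi = 1 - A * X := by
    conv_lhs => rw [← hV1P]
    rw [mul_assoc, hVVi, mul_one]
  have hPU : (A * X) * (1 + X * E) = (1 + X * E) * (A * X) := by
    calc (A * X) * (1 + X * E) = (A * X) + ((A * X) * X) * E := by noncomm_ring
    _ = (A * X) + X * E := by rw [hPX]
    _ = (A * X) + X * (E * (A * X)) := by rw [hEP]
    _ = (1 + X * E) * (A * X) := by noncomm_ring
  have hPUi : (A * X) * Ui = Ui * (A * X) := by
    calc (A * X) * Ui = (Ui * (1 + X * E)) * ((A * X) * Ui) := by rw [hUiU, one_mul]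
    _ = Ui * ((1 + X * E) * (A * X)) * Ui := by noncomm_ring
    _ = Ui * ((A * X) * (1 + X * E)) * Ui := by rw [hPU]
    _ = (Ui * (A * X)) * ((1 + X * E) * Ui) := by noncomm_ring
    _ = Ui * (A * X) := by rw [hUUi, mul_one]
  -- Z = Ui * X and its Drazin properties for B
  have hZB : (Ui * X) * B = A * X := by
    rw [hB]
    calc Ui * X * (A + E) = Ui * ((1 + X * E) - (1 - X * A)) := by noncomm_ring
    _ = Ui * ((1 + X * E) - (1 - A * X)) := by rw [← hX3]
    _ = Ui * (1 + X * E) - Ui * (1 - A * X) := by rw [mul_sub]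
    _ = 1 - (1 - A * X) := by rw [hUiU, hUi1P]
    _ = A * X := by noncomm_ring
  have hBZ : B * (Ui * X) = A * X := by
    rw [hB, hZ]
    calc (A + E) * (X * Vi) = ((1 + E * X) - (1 - A * X)) * Vi := by noncomm_ring
    _ = (1 + E * X) * Vi - (1 - A * X) * Vi := by rw [sub_mul]
    _ = 1 - (1 - A * X) := by rw [hVVi, h1PVi]
    _ = A * X := by noncomm_ring
  have hcomm : B * (Ui * X) = (Ui * X) * B := by rw [hBZ, hZB]
  have hZBZ : (Ui * X) * B * (Ui * X) = Ui * X := by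
    calc (Ui * X) * B * (Ui * X) = ((Ui * X) * B) * (Ui * X) := by rw [mul_assoc]
    _ = (A * X) * (Ui * X) := by rw [hZB]
    _ = ((A * X) * Ui) * X := by noncomm_ring
    _ = (Ui * (A * X)) * X := by rw [hPUi]
    _ = Ui * ((A * X) * X) := by rw [mul_assoc]
    _ = Ui * X := by rw [hPX]
  have hA1P : A * (1 - A * X) = (1 - A * X) * A := by
    calc A * (1 - A * X) = A - A * (A * X) := by noncomm_ring
    _ = A - A * (X * A) := by rw [hX3]
    _ = A - (A * X) * A := by rw [mul_assoc]
    _ = (1 - A * X) * A := by noncomm_ring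
  have hBpow : ∀ j : ℕ, B ^ j * (1 - A * X) = A ^ j * (1 - A * X) := by
    intro j
    induction j with
    | zero => simp
    | succ j ih =>
      have hBstep : B * (1 - A * X) = (1 - A * X) * A := by
        rw [hB, add_mul, hE1P, add_zero, hA1P]
      calc B ^ (j + 1) * (1 - A * X) = B ^ j * (B * (1 - A * X)) := by
            rw [pow_succ, mul_assoc]
      _ = B ^ j * ((1 - A * X) * A) := by rw [hBstep]
      _ = (B ^ j * (1 - A * X)) * A := by rw [mul_assoc]
      _ = (A ^ j * (1 - A * X)) * A := by rw [ih]
      _ = A ^ j * ((1 - A * X) * A) := by rw [mul_assoc]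
      _ = A ^ j * (A * (1 - A * X)) := by rw [hA1P]
      _ = A ^ (j + 1) * (1 - A * X) := by rw [pow_succ, mul_assoc]
  have hAkP : A ^ k * (A * X) = A ^ k := by
    rw [hX3, ← mul_assoc]; exact hX1
  have hAk1P : A ^ k * (1 - A * X) = 0 := by
    rw [mul_sub, mul_one, hAkP, sub_self]
  have hBk1P : B ^ k * (1 - A * X) = 0 := by rw [hBpow k, hAk1P]
  have hBkP : B ^ k * (A * X) = B ^ k := by
    have := hBk1P
    rw [mul_sub, mul_one, sub_eq_zero] at this
    exact this.symm
  have hZ1 : B ^ k * (Ui * X) * B = B ^ k := by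
    rw [mul_assoc, hZB, hBkP]
  -- uniqueness of the Drazin inverse: Y = Ui * X
  have hYZ : Ui * X = Y :=
    drazin_unique B (Ui * X) Y k m hZ1 hZBZ hcomm hY1 hY2 hY3
  have hdiff : Y - X = -(Ui * (X * E) * X) := by
    rw [← hYZ]
    calc Ui * X - X = Ui * X - (Ui * (1 + X * E)) * X := by rw [hUiU, one_mul]
    _ = -(Ui * (X * E) * X) := by noncomm_ring
  have hs0 : 0 ≤ specNorm (X * E) := specNorm_nonneg _
  have hs1 : 0 < 1 - specNorm (X * E) := by linarith
  rw [hdiff, specNorm_neg]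
  calc specNorm (Ui * (X * E) * X)
      ≤ specNorm (Ui * (X * E)) * specNorm X := specNorm_mul_le _ _
  _ ≤ (specNorm Ui * specNorm (X * E)) * specNorm X :=
      mul_le_mul_of_nonneg_right (specNorm_mul_le _ _) (specNorm_nonneg _)
  _ ≤ ((1 / (1 - specNorm (X * E))) * specNorm (X * E)) * specNorm X := by
      exact mul_le_mul_of_nonneg_right
        (mul_le_mul_of_nonneg_right hinv hs0) (specNorm_nonneg _)
  _ = specNorm X * specNorm (X * E) / (1 - specNorm (X * E)) := by
      field_simp
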